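/- Fix an integer s ≥ 5 and let σ = (4s+3, 2s+1, s+1, s, 1, …, 1) with s trailing entries equal to 1. Then T^σ_{11s²−33s+25} ≥ 22s² − 22s − 24; that is, there exists α ∈ ℤ_{≥0}^{s+4} with Σ_j α_j(α_j+1) ≤ 2(11s² − 33s + 25) and σ·α = 22s² − 22s − 24 (for instance α = (4s−6, 2s−4, s−2, s−3, 0, …, 0)). -/
import Mathlib


open Finset

/-- `σ` is a changemaker vector: all entries are positive and every integer `k` with
`0 ≤ k ≤ σ_0 + ⋯ + σ_n` is the sum of a subset of the entries. -/
def IsChangemaker {n : ℕ} (σ : Fin (n + 1) → ℕ) : Prop :=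
  (∀ i, 0 < σ i) ∧
    ∀ k : ℕ, k ≤ ∑ i, σ i → ∃ A : Finset (Fin (n + 1)), ∑ i ∈ A, σ i = k

/-- `Tcm σ m = T^σ_m`, the maximum of `σ·α` over all `α ∈ ℤ_{≥0}^{n+1}` with
`Σ_j α_j (α_j + 1) ≤ 2m` (the maximum exists: the set is nonempty and bounded). -/
noncomputable def Tcm {n : ℕ} (σ : Fin (n + 1) → ℕ) (m : ℕ) : ℕ :=
  sSup {t : ℕ | ∃ α : Fin (n + 1) → ℕ,
    (∑ j, α j * (α j + 1)) ≤ 2 * m ∧ t = ∑ j, σ j * α j}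

/-- `Vcm σ i = V^σ_i`, the `i`-th relevant coefficient of `σ`:
the least `m` with `T^σ_m ≥ i` (and `V^σ_0 = 0`). -/
noncomputable def Vcm {n : ℕ} (σ : Fin (n + 1) → ℕ) (i : ℕ) : ℕ :=
  sInf {m : ℕ | i ≤ Tcm σ m}

lemma tcm_bdd {n : ℕ} (σ : Fin (n + 1) → ℕ) (m : ℕ) :
    BddAbove {t : ℕ | ∃ α : Fin (n + 1) → ℕ,
      (∑ j, α j * (α j + 1)) ≤ 2 * m ∧ t = ∑ j, σ j * α j} := by
  refine ⟨(∑ j, σ j) * (2 * m), ?_⟩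
  rintro x ⟨α, hα, rfl⟩
  rw [Finset.sum_mul]
  refine Finset.sum_le_sum fun j _ => ?_
  have h1 : α j * (α j + 1) ≤ 2 * m :=
    le_trans (Finset.single_le_sum (f := fun j => α j * (α j + 1))
      (fun _ _ => Nat.zero_le _) (Finset.mem_univ j)) hα
  have h2 : α j ≤ 2 * m := by nlinarith
  exact Nat.mul_le_mul_left _ h2

lemma sum_four {n : ℕ} (hn : 4 ≤ n + 1) (F : ℕ → ℕ) (hF : ∀ j, 4 ≤ j → F j = 0) :
    ∑ j : Fin (n + 1), F j.val = F 0 + F 1 + F 2 + F 3 := by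
  rw [Fin.sum_univ_eq_sum_range]
  rw [← Finset.sum_subset (Finset.range_subset_range.mpr hn : Finset.range 4 ⊆ Finset.range (n + 1))]
  · simp [Finset.sum_range_succ]
  · intro x _ hx
    exact hF x (by simpa using hx)

theorem stmt_17 (s : ℕ) (hs : 5 ≤ s) (σ : Fin (s + 3 + 1) → ℕ)
    (hσ : σ = fun j : Fin (s + 3 + 1) => if j.val = 0 then 4 * s + 3
      else if j.val = 1 then 2 * s + 1
      else if j.val = 2 then s + 1
      else if j.val = 3 then s else 1) :
    22 * s ^ 2 - 22 * s - 24 ≤ Tcm σ (11 * s ^ 2 - 33 * s + 25) := by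
  obtain ⟨t, rfl⟩ : ∃ t, s = t + 5 := ⟨s - 5, by omega⟩
  have hm : 11 * (t + 5) ^ 2 - 33 * (t + 5) + 25 = 11 * t ^ 2 + 77 * t + 135 := by
    have h1 : 11 * (t + 5) ^ 2 = 11 * t ^ 2 + 110 * t + 275 := by ring
    omega
  have hv : 22 * (t + 5) ^ 2 - 22 * (t + 5) - 24 = 22 * t ^ 2 + 198 * t + 416 := by
    have h1 : 22 * (t + 5) ^ 2 = 22 * t ^ 2 + 220 * t + 550 := by ring
    omega
  rw [hm, hv]
  set A : ℕ → ℕ := fun j => if j = 0 then 4 * t + 14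
    else if j = 1 then 2 * t + 6
    else if j = 2 then t + 3
    else if j = 3 then t + 2 else 0 with hA
  have hmem : (22 * t ^ 2 + 198 * t + 416 : ℕ) ∈
      {x : ℕ | ∃ α : Fin (t + 5 + 3 + 1) → ℕ,
        (∑ j, α j * (α j + 1)) ≤ 2 * (11 * t ^ 2 + 77 * t + 135) ∧
        x = ∑ j, σ j * α j} := by
    refine ⟨fun j => A j.val, ?_, ?_⟩
    · have := sum_four (n := t + 5 + 3) (by omega) (fun j => A j * (A j + 1))
        (fun j hj => by
          have h0 : j ≠ 0 := by omega
          have h1 : j ≠ 1 := by omega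
          have h2 : j ≠ 2 := by omega
          have h3 : j ≠ 3 := by omega
          simp [hA, h0, h1, h2, h3])
      rw [this]
      simp only [hA]
      norm_num
      nlinarith
    · subst hσ
      have := sum_four (n := t + 5 + 3) (by omega)
        (fun j => (if j = 0 then 4 * (t + 5) + 3
          else if j = 1 then 2 * (t + 5) + 1
          else if j = 2 then (t + 5) + 1
          else if j = 3 then (t + 5) else 1) * A j)
        (fun j hj => by
          have h0 : j ≠ 0 := by omega
          have h1 : j ≠ 1 := by omega
          have h2 : j ≠ 2 := by omega
          have h3 : j ≠ 3 := by omega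
          simp [hA, h0, h1, h2, h3])
      simp only at this
      rw [this]
      simp only [hA]
      norm_num
      ring
  exact le_csSup (tcm_bdd σ _) hmem
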